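/- arXiv:0812.4156 — 3 statements merged into one kernel-verified Lean document; each statement's English description precedes it below -/
import Mathlib

section
/- Let (Ω, 𝓕, P) be a probability space, τ : Ω → [0, ∞) a measurable random time, t ≥ 0, and 𝓗 a sub-σ-algebra of 𝓕. Let 𝓙_t be the σ-algebra generated by the events {τ > u} for u ∈ [0, t], and set 𝓕_t = 𝓙_t ⊔ 𝓗 (the σ-algebra generated by their union). Assume P(τ > t | 𝓗) > 0 almost surely. Then for every integrable random variable Y satisfying Y = 1_{τ > t} · Y almost surely, one has, almost surely, E[Y | 𝓕_t] = 1_{τ > t} · E[Y | 𝓗] / P(τ > t | 𝓗). -/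
open MeasureTheory

private lemma jr_aux_meas_min_div {Ω : Type*} {m : MeasurableSpace Ω} {E Z : Ω → ℝ}
    (hE : Measurable E) (hZ : Measurable Z) (n : ℝ) :
    Measurable fun ω => min (|E ω| / max (Z ω) 0) n :=
  (hE.abs.div (hZ.max measurable_const)).min measurable_const

/-- **Jeanblanc–Rutkowski pricing formula.** For a random (default) time `τ ≥ 0`,
`𝓙_t = σ({τ > u}, u ≤ t)`, `𝓕_t = 𝓙_t ⊔ 𝓗`, and `P(τ > t | 𝓗) > 0` a.s., every
integrable payoff `Y` vanishing on `{τ ≤ t}` satisfies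
`E[Y | 𝓕_t] = 1_{τ > t} · E[Y | 𝓗] / P(τ > t | 𝓗)` almost surely. -/
theorem jeanblanc_rutkowski_formula
    {Ω : Type*} {m0 : MeasurableSpace Ω} {P : Measure Ω} [IsProbabilityMeasure P]
    {τ : Ω → ℝ} (hτ_meas : Measurable τ) (hτ_nonneg : ∀ ω, 0 ≤ τ ω)
    {t : ℝ} (ht : 0 ≤ t)
    {𝓗 : MeasurableSpace Ω} (h𝓗 : 𝓗 ≤ m0)
    (𝓙 : MeasurableSpace Ω)
    (h𝓙 : 𝓙 = MeasurableSpace.generateFrom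
      {s | ∃ u : ℝ, 0 ≤ u ∧ u ≤ t ∧ s = {ω | u < τ ω}})
    (hpos : ∀ᵐ ω ∂P,
      0 < condExp 𝓗 P ((Set.indicator {ω' | t < τ ω'} (fun _ => (1 : ℝ)))) ω)
    {Y : Ω → ℝ} (hY_int : Integrable Y P)
    (hY_def : Y =ᵐ[P] fun ω => Set.indicator {ω' | t < τ ω'} (fun _ => (1 : ℝ)) ω * Y ω) :
    condExp (𝓙 ⊔ 𝓗) P Y =ᵐ[P] fun ω =>
      Set.indicator {ω' | t < τ ω'} (fun _ => (1 : ℝ)) ω * condExp 𝓗 P Y ω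
        / condExp 𝓗 P ((Set.indicator {ω' | t < τ ω'} (fun _ => (1 : ℝ)))) ω := by
  letI : MeasurableSpace Ω := m0
  set A : Set Ω := {ω | t < τ ω} with hA_def
  set ind : Ω → ℝ := A.indicator (fun _ => (1 : ℝ)) with hind_def
  set Z : Ω → ℝ := condExp 𝓗 P ind with hZ_def
  set E : Ω → ℝ := condExp 𝓗 P Y with hE_def
  set X : Ω → ℝ := fun ω => ind ω * E ω / Z ω with hX_def
  -- basic measurability
  have hm𝓙 : 𝓙 ≤ m0 := by
    rw [h𝓙]
    refine MeasurableSpace.generateFrom_le ?_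
    rintro s ⟨u, -, -, rfl⟩
    exact hτ_meas measurableSet_Ioi
  have hm : 𝓙 ⊔ 𝓗 ≤ m0 := sup_le hm𝓙 h𝓗
  have hA_m0 : MeasurableSet[m0] A := hτ_meas measurableSet_Ioi
  have hA_J : MeasurableSet[𝓙] A := by
    rw [h𝓙]; exact MeasurableSpace.measurableSet_generateFrom ⟨t, ht, le_rfl, rfl⟩
  have hA_sup : MeasurableSet[𝓙 ⊔ 𝓗] A := (le_sup_left : 𝓙 ≤ 𝓙 ⊔ 𝓗) A hA_J
  have hind_nonneg : ∀ ω, 0 ≤ ind ω := fun ω =>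
    Set.indicator_nonneg (fun _ _ => zero_le_one) ω
  have hind_le_one : ∀ ω, ind ω ≤ 1 := fun ω => by
    by_cases h : ω ∈ A <;> simp [hind_def, h]
  have hind_int : Integrable ind P := (integrable_const (1 : ℝ)).indicator hA_m0
  have hE_sm : StronglyMeasurable[𝓗] E := stronglyMeasurable_condExp
  have hZ_sm : StronglyMeasurable[𝓗] Z := stronglyMeasurable_condExp
  have hE_m : Measurable[𝓗] E := hE_sm.measurable
  have hZ_m : Measurable[𝓗] Z := hZ_sm.measurable
  have hE_m0 : Measurable[m0] E := hE_m.mono h𝓗 le_rfl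
  have hZ_m0 : Measurable[m0] Z := hZ_m.mono h𝓗 le_rfl
  have hE_int : Integrable E P := integrable_condExp
  have hZ_int : Integrable Z P := integrable_condExp
  -- the candidate is strongly measurable w.r.t. `𝓙 ⊔ 𝓗`
  have hX_m : Measurable[𝓙 ⊔ 𝓗] X := by
    have hind_m : Measurable[𝓙 ⊔ 𝓗] ind :=
      (measurable_const.indicator hA_sup)
    exact (hind_m.mul ((hE_m.mono le_sup_right le_rfl))).div
      (hZ_m.mono le_sup_right le_rfl)
  have hX_sm : StronglyMeasurable[𝓙 ⊔ 𝓗] X := hX_m.stronglyMeasurable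
  have hX_aesm : AEStronglyMeasurable X P :=
    (hX_sm.mono hm).aestronglyMeasurable
  -- positivity of `Z` a.e.
  have hZ_pos : ∀ᵐ ω ∂P, 0 < Z ω := hpos
  -- the pull-out computation
  have pull : ∀ h : Ω → ℝ, StronglyMeasurable[𝓗] h →
      Integrable (fun ω => h ω * ind ω) P →
      ∫ ω, h ω * ind ω ∂P = ∫ ω, h ω * Z ω ∂P := by
    intro h hsm hint
    have h1 : condExp 𝓗 P (h * ind) =ᵐ[P] h * Z :=
      condExp_mul_of_stronglyMeasurable_left hsm hint hind_int
    calc ∫ ω, h ω * ind ω ∂P = ∫ ω, condExp 𝓗 P (h * ind) ω ∂P :=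
          (integral_condExp h𝓗).symm
      _ = ∫ ω, h ω * Z ω ∂P := integral_congr_ae h1
  -- structural lemma: every set in 𝓙 ⊔ 𝓗 agrees on A with a set in 𝓗
  have key : ∀ S : Set Ω, MeasurableSet[𝓙 ⊔ 𝓗] S →
      ∃ C, MeasurableSet[𝓗] C ∧ S ∩ A = C ∩ A := by
    intro S hS
    let m' : MeasurableSpace Ω :=
      { MeasurableSet' := fun S => ∃ C, MeasurableSet[𝓗] C ∧ S ∩ A = C ∩ A
        measurableSet_empty := ⟨∅, @MeasurableSet.empty Ω 𝓗, rfl⟩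
        measurableSet_compl := by
          rintro S ⟨C, hC, hSC⟩
          refine ⟨Cᶜ, hC.compl, Set.ext fun x => ?_⟩
          have hx := Set.ext_iff.mp hSC x
          by_cases hxA : x ∈ A
          · simp only [Set.mem_inter_iff, hxA, and_true] at hx ⊢
            simp only [Set.mem_compl_iff]
            exact not_iff_not.mpr hx
          · simp [Set.mem_inter_iff, hxA]
        measurableSet_iUnion := by
          intro f hf
          choose C hC hfC using hf
          exact ⟨⋃ i, C i, MeasurableSet.iUnion (m := 𝓗) hC, by
            rw [Set.iUnion_inter, Set.iUnion_inter]
            exact Set.iUnion_congr hfC⟩ }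
    have hle : 𝓙 ⊔ 𝓗 ≤ m' := by
      refine sup_le ?_ (fun s hs => ⟨s, hs, rfl⟩)
      rw [h𝓙]
      refine MeasurableSpace.generateFrom_le ?_
      rintro s ⟨u, hu0, hut, rfl⟩
      refine ⟨Set.univ, MeasurableSet.univ (α := Ω) (m := 𝓗), ?_⟩
      have : A ⊆ {ω | u < τ ω} := fun x hx => lt_of_le_of_lt hut hx
      rw [Set.univ_inter, Set.inter_eq_self_of_subset_right this]
    exact hle S hS
  -- Integrability of the candidate X
  have hX_int : Integrable X P := by
    set Zp : Ω → ℝ := fun ω => max (Z ω) 0 with hZp_def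
    set g : Ω → ℝ := fun ω => |E ω| / Zp ω with hg_def
    set f : ℕ → Ω → ℝ := fun n ω => min (g ω) n with hf_def
    have hg_nonneg : ∀ ω, 0 ≤ g ω := fun ω => div_nonneg (abs_nonneg _) (le_max_right _ _)
    have hf_nonneg : ∀ n ω, 0 ≤ f n ω := fun n ω => le_min (hg_nonneg ω) (Nat.cast_nonneg n)
    have hf_le : ∀ (n : ℕ) ω, f n ω ≤ n := fun n ω => min_le_right _ _
    have hf_m : ∀ n : ℕ, Measurable[𝓗] (f n) := fun n =>
      jr_aux_meas_min_div hE_m hZ_m (n : ℝ)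
    have hf_norm : ∀ (n : ℕ), ∀ᵐ ω ∂P, ‖f n ω‖ ≤ (n : ℝ) := fun n =>
      Filter.Eventually.of_forall fun ω => by
        rw [Real.norm_eq_abs, abs_of_nonneg (hf_nonneg n ω)]; exact hf_le n ω
    have hf_aesm : ∀ n : ℕ, AEStronglyMeasurable (f n) P := fun n =>
      ((hf_m n).mono h𝓗 le_rfl).stronglyMeasurable.aestronglyMeasurable
    have hfind_int : ∀ n : ℕ, Integrable (fun ω => f n ω * ind ω) P := fun n =>
      hind_int.bdd_mul (hf_aesm n) (hf_norm n)
    have key_n : ∀ n : ℕ, ∫ ω, f n ω * ind ω ∂P ≤ ∫ ω, |E ω| ∂P := by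
      intro n
      rw [pull (f n) ((hf_m n).stronglyMeasurable) (hfind_int n)]
      refine integral_mono_ae (hZ_int.bdd_mul (hf_aesm n) (hf_norm n)) hE_int.abs ?_
      filter_upwards [hZ_pos] with ω hω
      have hZpω : Zp ω = Z ω := max_eq_left hω.le
      calc f n ω * Z ω ≤ g ω * Z ω :=
            mul_le_mul_of_nonneg_right (min_le_left _ _) hω.le
        _ = |E ω| := by rw [hg_def]; simp only [hZpω]; exact div_mul_cancel₀ _ hω.ne'
    set F : ℕ → Ω → ENNReal := fun n ω => ENNReal.ofReal (f n ω * ind ω) with hF_def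
    have hind_m0 : Measurable[m0] ind := measurable_const.indicator hA_m0
    have hF_m : ∀ n, Measurable[m0] (F n) := fun n =>
      (((hf_m n).mono h𝓗 le_rfl).mul hind_m0).ennreal_ofReal
    have hF_mono : Monotone F := by
      intro n m hnm
      intro ω
      refine ENNReal.ofReal_le_ofReal ?_
      exact mul_le_mul_of_nonneg_right
        (min_le_min le_rfl (Nat.cast_le.mpr hnm)) (hind_nonneg ω)
    have hF_sup : ∀ ω, (⨆ n, F n ω) = ENNReal.ofReal (g ω * ind ω) := by
      intro ω
      refine le_antisymm (iSup_le fun n => ENNReal.ofReal_le_ofReal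
        (mul_le_mul_of_nonneg_right (min_le_left _ _) (hind_nonneg ω))) ?_
      refine le_iSup_of_le ⌈g ω⌉₊ ?_
      rw [hF_def]
      simp only []
      rw [show f ⌈g ω⌉₊ ω = g ω from min_eq_left (Nat.le_ceil _)]
    have hlint : ∫⁻ ω, ENNReal.ofReal (g ω * ind ω) ∂P ≤ ENNReal.ofReal (∫ ω, |E ω| ∂P) := by
      have h1 : ∫⁻ ω, ENNReal.ofReal (g ω * ind ω) ∂P = ⨆ n, ∫⁻ ω, F n ω ∂P := by
        rw [← lintegral_iSup hF_m hF_mono]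
        refine lintegral_congr fun ω => (hF_sup ω).symm
      rw [h1]
      refine iSup_le fun n => ?_
      have h2 : ∫⁻ ω, F n ω ∂P = ENNReal.ofReal (∫ ω, f n ω * ind ω ∂P) :=
        (ofReal_integral_eq_lintegral_ofReal (hfind_int n)
          (Filter.Eventually.of_forall fun ω =>
            mul_nonneg (hf_nonneg n ω) (hind_nonneg ω))).symm
      rw [h2]
      exact ENNReal.ofReal_le_ofReal (key_n n)
    refine ⟨hX_aesm, ?_⟩
    rw [hasFiniteIntegral_iff_norm]
    have hXnorm : (fun ω => ENNReal.ofReal ‖X ω‖) =ᵐ[P]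
        fun ω => ENNReal.ofReal (g ω * ind ω) := by
      filter_upwards [hZ_pos] with ω hω
      by_cases hωA : ω ∈ A
      · have hind1 : ind ω = 1 := Set.indicator_of_mem hωA _
        have hXω : X ω = E ω / Z ω := by rw [hX_def]; simp [hind1]
        have hZpω : Zp ω = Z ω := max_eq_left hω.le
        rw [hXω, Real.norm_eq_abs, abs_div, abs_of_pos hω, hg_def]
        simp only [hZpω, hind1, mul_one]
      · have hind0 : ind ω = 0 := Set.indicator_of_notMem hωA _
        have hXω : X ω = 0 := by rw [hX_def]; simp [hind0]
        rw [hXω, hg_def]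
        simp only [hind0, mul_zero, norm_zero]
    calc ∫⁻ ω, ENNReal.ofReal ‖X ω‖ ∂P
        = ∫⁻ ω, ENNReal.ofReal (g ω * ind ω) ∂P := lintegral_congr_ae hXnorm
      _ ≤ ENNReal.ofReal (∫ ω, |E ω| ∂P) := hlint
      _ < ⊤ := ENNReal.ofReal_lt_top
  -- set integral equality
  have hset : ∀ s : Set Ω, MeasurableSet[𝓙 ⊔ 𝓗] s → P s < ⊤ →
      ∫ ω in s, X ω ∂P = ∫ ω in s, Y ω ∂P := by
    intro s hs _
    obtain ⟨C, hC, hSC⟩ := key s hs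
    have hs0 : MeasurableSet[m0] s := hm s hs
    have hC0 : MeasurableSet[m0] C := h𝓗 C hC
    have hX_off : ∀ ω, ω ∉ A → X ω = 0 := fun ω hω => by
      simp [hX_def, hind_def, Set.indicator_of_notMem hω]
    have hmem : ∀ ω ∈ A, (ω ∈ s ↔ ω ∈ C) := by
      intro ω hωA
      have h := Set.ext_iff.mp hSC ω
      simpa [hωA] using h
    have h1 : s.indicator X = C.indicator X := by
      funext ω
      by_cases hωA : ω ∈ A
      · by_cases hωs : ω ∈ s
        · rw [Set.indicator_of_mem hωs, Set.indicator_of_mem ((hmem ω hωA).mp hωs)]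
        · rw [Set.indicator_of_notMem hωs,
            Set.indicator_of_notMem (fun h => hωs ((hmem ω hωA).mpr h))]
      · have h0 : X ω = 0 := hX_off ω hωA
        by_cases hωs : ω ∈ s <;> by_cases hωC : ω ∈ C <;>
          simp [Set.indicator_of_mem, Set.indicator_of_notMem, hωs, hωC, h0]
    have h2 : s.indicator Y =ᵐ[P] C.indicator Y := by
      filter_upwards [hY_def] with ω hω
      by_cases hωA : ω ∈ A
      · by_cases hωs : ω ∈ s
        · rw [Set.indicator_of_mem hωs, Set.indicator_of_mem ((hmem ω hωA).mp hωs)]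
        · rw [Set.indicator_of_notMem hωs,
            Set.indicator_of_notMem (fun h => hωs ((hmem ω hωA).mpr h))]
      · have hY0 : Y ω = 0 := by
          rw [hω]; simp [hind_def, Set.indicator_of_notMem hωA]
        by_cases hωs : ω ∈ s <;> by_cases hωC : ω ∈ C <;>
          simp [Set.indicator_of_mem, Set.indicator_of_notMem, hωs, hωC, hY0]
    set h : Ω → ℝ := C.indicator (fun ω => E ω / Z ω) with hh_def
    have hh_m : Measurable[𝓗] h := (hE_m.div hZ_m).indicator hC
    have hh_sm : StronglyMeasurable[𝓗] h := hh_m.stronglyMeasurable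
    have hXC_eq : C.indicator X = fun ω => h ω * ind ω := by
      funext ω
      by_cases hωC : ω ∈ C <;> by_cases hωA : ω ∈ A <;>
        simp [hh_def, hX_def, hind_def, Set.indicator_of_mem, Set.indicator_of_notMem,
          hωC, hωA, mul_comm, mul_div_assoc, div_eq_mul_inv]
    have hint1 : Integrable (fun ω => h ω * ind ω) P := by
      rw [← hXC_eq]; exact hX_int.indicator hC0
    have h3 : (fun ω => h ω * Z ω) =ᵐ[P] C.indicator E := by
      filter_upwards [hZ_pos] with ω hω
      by_cases hωC : ω ∈ C
      · rw [hh_def]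
        simp only [Set.indicator_of_mem hωC]
        exact div_mul_cancel₀ _ hω.ne'
      · rw [hh_def]
        simp [Set.indicator_of_notMem hωC]
    calc ∫ ω in s, X ω ∂P
        = ∫ ω, (s.indicator X) ω ∂P := (integral_indicator hs0).symm
      _ = ∫ ω, (C.indicator X) ω ∂P := by rw [h1]
      _ = ∫ ω, h ω * ind ω ∂P := by rw [hXC_eq]
      _ = ∫ ω, h ω * Z ω ∂P := pull h hh_sm hint1
      _ = ∫ ω, (C.indicator E) ω ∂P := integral_congr_ae h3
      _ = ∫ ω in C, E ω ∂P := integral_indicator hC0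
      _ = ∫ ω in C, Y ω ∂P := setIntegral_condExp h𝓗 hY_int hC
      _ = ∫ ω, (C.indicator Y) ω ∂P := (integral_indicator hC0).symm
      _ = ∫ ω, (s.indicator Y) ω ∂P := (integral_congr_ae h2).symm
      _ = ∫ ω in s, Y ω ∂P := integral_indicator hs0
  haveI : SigmaFinite (P.trim hm) := by infer_instance
  exact (ae_eq_condExp_of_forall_setIntegral_eq hm hY_int
    (fun s _ _ => hX_int.integrableOn) hset hX_sm.aestronglyMeasurable).symm
end

section
/- Let (Ω, 𝓕, P) be a probability space, τ : Ω → [0, ∞) a measurable random time, t ≥ 0, and 𝓗 a sub-σ-algebra of 𝓕. Let 𝓙_t be the σ-algebra generated by the events {τ > u} for u ∈ [0, t], and let σ(τ) be the σ-algebra generated by τ. Then for every integrable random variable Y one has, almost surely, 1_{τ ≤ t} · E[Y | 𝓙_t ⊔ 𝓗] = 1_{τ ≤ t} · E[Y | σ(τ) ⊔ 𝓗]. -/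
open MeasureTheory

/-- On the event `{τ ≤ t}`, conditioning on `𝓙_t ⊔ 𝓗` is the same as conditioning on
`σ(τ) ⊔ 𝓗`: for every integrable `Y`, almost surely
`1_{τ ≤ t} · E[Y | 𝓙_t ⊔ 𝓗] = 1_{τ ≤ t} · E[Y | σ(τ) ⊔ 𝓗]`. -/
theorem indicator_condexp_join_eq_of_le
    {Ω : Type*} {m0 : MeasurableSpace Ω} {P : Measure Ω} [IsProbabilityMeasure P]
    {τ : Ω → ℝ} (hτ_meas : Measurable τ) (hτ_nonneg : ∀ ω, 0 ≤ τ ω)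
    {t : ℝ} (ht : 0 ≤ t)
    {𝓗 : MeasurableSpace Ω} (h𝓗 : 𝓗 ≤ m0)
    (𝓙 : MeasurableSpace Ω)
    (h𝓙 : 𝓙 = MeasurableSpace.generateFrom
      {s | ∃ u : ℝ, 0 ≤ u ∧ u ≤ t ∧ s = {ω | u < τ ω}})
    {Y : Ω → ℝ} (hY_int : Integrable Y P) :
    (fun ω => Set.indicator {ω' | τ ω' ≤ t} (fun _ => (1 : ℝ)) ω * condExp (𝓙 ⊔ 𝓗) P Y ω)
      =ᵐ[P]
    (fun ω => Set.indicator {ω' | τ ω' ≤ t} (fun _ => (1 : ℝ)) ω *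
      condExp (MeasurableSpace.comap τ inferInstance ⊔ 𝓗) P Y ω) := by
  set s : Set Ω := {ω | τ ω ≤ t} with hs_def
  -- `s = {τ ≤ t}` is `𝓙`-measurable
  have hsJ : MeasurableSet[𝓙] s := by
    have h1 : MeasurableSet[𝓙] {ω | t < τ ω} := by
      rw [h𝓙]
      exact MeasurableSpace.measurableSet_generateFrom ⟨t, ht, le_refl t, rfl⟩
    have h2 := h1.compl
    convert h2 using 1
    ext ω; simp [hs_def, not_lt]
  have h𝓙_le_comap : 𝓙 ≤ MeasurableSpace.comap τ inferInstance := by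
    rw [h𝓙]
    refine MeasurableSpace.generateFrom_le ?_
    rintro _ ⟨u, hu0, hut, rfl⟩
    exact ⟨Set.Ioi u, measurableSet_Ioi, rfl⟩
  have hcomap_le : MeasurableSpace.comap τ inferInstance ≤ m0 := hτ_meas.comap_le
  have hm₁ : 𝓙 ⊔ 𝓗 ≤ m0 := sup_le (h𝓙_le_comap.trans hcomap_le) h𝓗
  have hm₂ : MeasurableSpace.comap τ inferInstance ⊔ 𝓗 ≤ m0 := sup_le hcomap_le h𝓗
  -- key: `s ∩ τ ⁻¹' B ∈ 𝓙` for every Borel `B`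
  have key : ∀ B : Set ℝ, MeasurableSet B → MeasurableSet[𝓙] (s ∩ τ ⁻¹' B) := by
    intro B hB
    let mB : MeasurableSpace ℝ :=
      { MeasurableSet' := fun B => MeasurableSet[𝓙] (s ∩ τ ⁻¹' B)
        measurableSet_empty := by simp
        measurableSet_compl := fun B hBm => by
          have hEq : s ∩ τ ⁻¹' Bᶜ = s \ (s ∩ τ ⁻¹' B) := by
            ext ω; simp only [Set.mem_inter_iff, Set.mem_preimage, Set.mem_compl_iff,
              Set.mem_diff]; tauto
          show MeasurableSet[𝓙] (s ∩ τ ⁻¹' Bᶜ)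
          rw [hEq]; exact hsJ.diff hBm
        measurableSet_iUnion := fun f hf => by
          have hEq : s ∩ τ ⁻¹' (⋃ i, f i) = ⋃ i, s ∩ τ ⁻¹' (f i) := by
            rw [Set.preimage_iUnion, Set.inter_iUnion]
          show MeasurableSet[𝓙] (s ∩ τ ⁻¹' ⋃ i, f i)
          rw [hEq]; exact MeasurableSet.iUnion hf }
    have hIoi : ∀ u : ℝ, MeasurableSet[𝓙] (s ∩ τ ⁻¹' Set.Ioi u) := by
      intro u
      rcases lt_or_ge u 0 with hu | hu0
      · have hEq : s ∩ τ ⁻¹' Set.Ioi u = s := by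
          ext ω
          simp only [Set.mem_inter_iff, Set.mem_preimage, Set.mem_Ioi, and_iff_left_iff_imp]
          exact fun _ => lt_of_lt_of_le hu (hτ_nonneg ω)
        rw [hEq]; exact hsJ
      rcases le_or_gt u t with hut | htu
      · have hgen : MeasurableSet[𝓙] {ω | u < τ ω} := by
          rw [h𝓙]
          exact MeasurableSpace.measurableSet_generateFrom ⟨u, hu0, hut, rfl⟩
        exact hsJ.inter hgen
      · have hEq : s ∩ τ ⁻¹' Set.Ioi u = ∅ := by
          ext ω
          simp only [Set.mem_inter_iff, Set.mem_preimage, Set.mem_Ioi, Set.mem_empty_iff_false,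
            iff_false, hs_def, Set.mem_setOf_eq, not_and, not_lt]
          exact fun hω => hω.trans htu.le
        rw [hEq]; exact MeasurableSet.empty
    have hborel : (Real.measurableSpace : MeasurableSpace ℝ) ≤ mB := by
      show borel ℝ ≤ mB
      rw [borel_eq_generateFrom_Ioi]
      refine MeasurableSpace.generateFrom_le ?_
      rintro _ ⟨u, rfl⟩
      exact hIoi u
    exact hborel B hB
  -- on `s`, the two σ-algebras agree
  have hsJH : MeasurableSet[𝓙 ⊔ 𝓗] s := (le_sup_left : 𝓙 ≤ 𝓙 ⊔ 𝓗) s hsJ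
  have h_inter : ∀ A : Set Ω, MeasurableSet[MeasurableSpace.comap τ inferInstance ⊔ 𝓗] A →
      MeasurableSet[𝓙 ⊔ 𝓗] (s ∩ A) := by
    intro A hA
    let m' : MeasurableSpace Ω :=
      { MeasurableSet' := fun A => MeasurableSet[𝓙 ⊔ 𝓗] (s ∩ A)
        measurableSet_empty := by simp
        measurableSet_compl := fun A hAm => by
          have hEq : s ∩ Aᶜ = s \ (s ∩ A) := by
            ext ω; simp only [Set.mem_inter_iff, Set.mem_compl_iff, Set.mem_diff]; tauto
          show MeasurableSet[𝓙 ⊔ 𝓗] (s ∩ Aᶜ)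
          rw [hEq]; exact hsJH.diff hAm
        measurableSet_iUnion := fun f hf => by
          have hEq : s ∩ (⋃ i, f i) = ⋃ i, s ∩ f i := Set.inter_iUnion _ _
          show MeasurableSet[𝓙 ⊔ 𝓗] (s ∩ ⋃ i, f i)
          rw [hEq]; exact MeasurableSet.iUnion hf }
    have hle : MeasurableSpace.comap τ inferInstance ⊔ 𝓗 ≤ m' := by
      refine sup_le ?_ ?_
      · rintro _ ⟨B, hB, rfl⟩
        exact (le_sup_left : 𝓙 ≤ 𝓙 ⊔ 𝓗) _ (key B hB)
      · intro A hA
        exact hsJH.inter ((le_sup_right : 𝓗 ≤ 𝓙 ⊔ 𝓗) A hA)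
    exact hle A hA
  have h_eq_on : ∀ A : Set Ω, MeasurableSet[𝓙 ⊔ 𝓗] (s ∩ A) ↔
      MeasurableSet[MeasurableSpace.comap τ inferInstance ⊔ 𝓗] (s ∩ A) := by
    intro A
    constructor
    · exact fun h => sup_le_sup_right h𝓙_le_comap 𝓗 _ h
    · intro h
      have := h_inter _ h
      rwa [← Set.inter_assoc, Set.inter_self] at this
  have hres : condExp (𝓙 ⊔ 𝓗) P Y =ᵐ[P.restrict s]
      condExp (MeasurableSpace.comap τ inferInstance ⊔ 𝓗) P Y :=
    condExp_ae_eq_restrict_of_measurableSpace_eq_on hm₁ hm₂ hsJH h_eq_on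
  have himp := ae_imp_of_ae_restrict hres
  filter_upwards [himp] with ω hω
  by_cases hωs : ω ∈ s
  · rw [Set.indicator_of_mem hωs, hω hωs]
  · rw [Set.indicator_of_notMem hωs, zero_mul, zero_mul]
end

section
/- Let (Ω, 𝓕, P) be a probability space, τ : Ω → [0, ∞) a measurable random time, t ≥ 0, and 𝓗 a sub-σ-algebra of 𝓕. Let 𝓙_t be the σ-algebra generated by the events {τ > u} for u ∈ [0, t], set 𝓕_t = 𝓙_t ⊔ 𝓗, and assume P(τ > t | 𝓗) > 0 almost surely. Then for every integrable random variable Y one has, almost surely, E[Y | 𝓕_t] = (1_{τ > t} / P(τ > t | 𝓗)) · E[1_{τ > t} · Y | 𝓗] + 1_{τ ≤ t} · E[Y | σ(τ) ⊔ 𝓗]. -/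
open MeasureTheory

/-- Auxiliary σ-algebra: sets whose intersection with a fixed measurable set `B`
is measurable for `m`. -/
private def traceSpace {α : Type*} (m : MeasurableSpace α) (B : Set α)
    (hB : MeasurableSet[m] B) : MeasurableSpace α where
  MeasurableSet' s := MeasurableSet[m] (s ∩ B)
  measurableSet_empty := by simp
  measurableSet_compl := by
    intro s hs
    have hset : sᶜ ∩ B = B \ (s ∩ B) := by
      ext ω; by_cases hω : ω ∈ s <;> simp [hω]
    rw [hset]; exact hB.diff hs
  measurableSet_iUnion := by
    intro f hf
    rw [Set.iUnion_inter]
    exact MeasurableSet.iUnion hf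


section Helpers

open MeasureTheory

variable {α : Type*} {m : MeasurableSpace α}

private lemma hm_const {c : ℝ} : Measurable[m] fun _ : α => c := measurable_const

private lemma hm_min {f g : α → ℝ} (hf : Measurable[m] f) (hg : Measurable[m] g) :
    Measurable[m] fun x => min (f x) (g x) := hf.min hg

private lemma hm_max {f g : α → ℝ} (hf : Measurable[m] f) (hg : Measurable[m] g) :
    Measurable[m] fun x => max (f x) (g x) := hf.max hg

private lemma hm_neg {f : α → ℝ} (hf : Measurable[m] f) :
    Measurable[m] fun x => -f x := hf.neg

private lemma hm_mul {f g : α → ℝ} (hf : Measurable[m] f) (hg : Measurable[m] g) :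
    Measurable[m] fun x => f x * g x := hf.mul hg

private lemma hm_div {f g : α → ℝ} (hf : Measurable[m] f) (hg : Measurable[m] g) :
    Measurable[m] fun x => f x / g x := hf.div hg

private lemma hm_add {f g : α → ℝ} (hf : Measurable[m] f) (hg : Measurable[m] g) :
    Measurable[m] fun x => f x + g x := hf.add hg

private lemma hm_abs {f : α → ℝ} (hf : Measurable[m] f) :
    Measurable[m] fun x => |f x| := hf.abs

private lemma hm_ofReal {f : α → ℝ} (hf : Measurable[m] f) :
    Measurable[m] fun x => ENNReal.ofReal (f x) := hf.ennreal_ofReal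

private lemma hm_indicator {s : Set α} (hs : MeasurableSet[m] s) {f : α → ℝ}
    (hf : Measurable[m] f) : Measurable[m] (s.indicator f) := hf.indicator hs

private lemma helper_sm_meas {f : α → ℝ} (hf : StronglyMeasurable[m] f) :
    Measurable[m] f := hf.measurable

private lemma helper_meas_sm {f : α → ℝ} (hf : Measurable[m] f) :
    StronglyMeasurable[m] f := hf.stronglyMeasurable

private lemma helper_meas_aesm {μ : Measure α} {f : α → ℝ} (hf : Measurable[m] f) :
    AEStronglyMeasurable f μ := hf.aestronglyMeasurable

private lemma helper_sm_aesm {μ : Measure α} {f : α → ℝ} (hf : StronglyMeasurable[m] f) :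
    AEStronglyMeasurable f μ := hf.aestronglyMeasurable

private lemma helper_int_indicator {μ : Measure α} {f : α → ℝ} (hf : Integrable f μ)
    {s : Set α} (hs : MeasurableSet[m] s) : Integrable (s.indicator f) μ :=
  hf.indicator hs

private lemma helper_bdd_mul {μ : Measure α} {f g : α → ℝ} (hg : Integrable g μ)
    (hf : AEStronglyMeasurable f μ) (hb : ∃ c : ℝ, ∀ x, ‖f x‖ ≤ c) :
    Integrable (fun x => f x * g x) μ := by
  obtain ⟨c, hc⟩ := hb; exact hg.bdd_mul hf (Filter.Eventually.of_forall hc)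

private lemma helper_int_mono {μ : Measure α} {f g : α → ℝ} (hg : Integrable g μ)
    (hf : AEStronglyMeasurable f μ) (h : ∀ᵐ x ∂μ, ‖f x‖ ≤ ‖g x‖) : Integrable f μ :=
  hg.mono hf h

private lemma helper_int_add {μ : Measure α} {f g : α → ℝ} (hf : Integrable f μ)
    (hg : Integrable g μ) : Integrable (fun x => f x + g x) μ := hf.add hg

private lemma helper_int_sub {μ : Measure α} {f g : α → ℝ} (hf : Integrable f μ)
    (hg : Integrable g μ) : Integrable (fun x => f x - g x) μ := hf.sub hg

private lemma helper_int_on {μ : Measure α} {f : α → ℝ} (hf : Integrable f μ)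
    {s : Set α} : IntegrableOn f s μ := hf.integrableOn

private lemma helper_integral_indicator {μ : Measure α} {f : α → ℝ} {s : Set α}
    (hs : MeasurableSet[m] s) : ∫ x, s.indicator f x ∂μ = ∫ x in s, f x ∂μ :=
  integral_indicator hs

private lemma helper_setIntegral_indicator {μ : Measure α} {f : α → ℝ} {s t : Set α}
    (ht : MeasurableSet[m] t) : ∫ x in s, t.indicator f x ∂μ = ∫ x in s ∩ t, f x ∂μ :=
  setIntegral_indicator ht

private lemma helper_integral_inter_add_diff {μ : Measure α} {f : α → ℝ} {s t : Set α}
    (ht : MeasurableSet[m] t) (hfs : IntegrableOn f s μ) :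
    ∫ x in s ∩ t, f x ∂μ + ∫ x in s \ t, f x ∂μ = ∫ x in s, f x ∂μ :=
  integral_inter_add_diff ht hfs

private lemma helper_integral_add_compl {μ : Measure α} {f : α → ℝ} {s : Set α}
    (hs : MeasurableSet[m] s) (hf : Integrable f μ) :
    ∫ x in s, f x ∂μ + ∫ x in sᶜ, f x ∂μ = ∫ x, f x ∂μ :=
  integral_add_compl hs hf

private lemma helper_integral_iUnion {μ : Measure α} {f : α → ℝ} {s : ℕ → Set α}
    (hm : ∀ i, MeasurableSet[m] (s i)) (hd : Pairwise (Function.onFun Disjoint s))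
    (hfi : IntegrableOn f (⋃ i, s i) μ) :
    ∫ x in ⋃ n, s n, f x ∂μ = ∑' n, ∫ x in s n, f x ∂μ :=
  integral_iUnion hm hd hfi

end Helpers

/-- **Generalized Jeanblanc–Rutkowski formula** (formula (14) of the paper).
For a random time `τ ≥ 0`, `𝓙_t = σ({τ > u}, u ≤ t)`, `𝓕_t = 𝓙_t ⊔ 𝓗`, and
`P(τ > t | 𝓗) > 0` a.s., every integrable `Y` satisfies, almost surely,
`E[Y | 𝓕_t] = (1_{τ > t} / P(τ > t | 𝓗)) · E[1_{τ > t} Y | 𝓗]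
              + 1_{τ ≤ t} · E[Y | σ(τ) ⊔ 𝓗]`. -/
theorem generalized_jeanblanc_rutkowski_formula
    {Ω : Type*} {m0 : MeasurableSpace Ω} {P : Measure Ω} [IsProbabilityMeasure P]
    {τ : Ω → ℝ} (hτ_meas : Measurable τ) (hτ_nonneg : ∀ ω, 0 ≤ τ ω)
    {t : ℝ} (ht : 0 ≤ t)
    {𝓗 : MeasurableSpace Ω} (h𝓗 : 𝓗 ≤ m0)
    (𝓙 : MeasurableSpace Ω)
    (h𝓙 : 𝓙 = MeasurableSpace.generateFrom
      {s | ∃ u : ℝ, 0 ≤ u ∧ u ≤ t ∧ s = {ω | u < τ ω}})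
    (hpos : ∀ᵐ ω ∂P,
      0 < condExp 𝓗 P ((Set.indicator {ω' | t < τ ω'} (fun _ => (1 : ℝ)))) ω)
    {Y : Ω → ℝ} (hY_int : Integrable Y P) :
    condExp (𝓙 ⊔ 𝓗) P Y =ᵐ[P] fun ω =>
      Set.indicator {ω' | t < τ ω'} (fun _ => (1 : ℝ)) ω
          / condExp 𝓗 P ((Set.indicator {ω' | t < τ ω'} (fun _ => (1 : ℝ)))) ω
          * condExp 𝓗 P (fun ω' =>
              Set.indicator {ω'' | t < τ ω''} (fun _ => (1 : ℝ)) ω' * Y ω') ω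
        + Set.indicator {ω' | τ ω' ≤ t} (fun _ => (1 : ℝ)) ω *
            condExp (MeasurableSpace.comap τ inferInstance ⊔ 𝓗) P Y ω := by
  classical
  -- ## Abbreviations
  set A : Set Ω := {ω' | t < τ ω'} with hA_def
  set B : Set Ω := {ω' | τ ω' ≤ t} with hB_def
  have hA : MeasurableSet[m0] A := measurableSet_lt measurable_const hτ_meas
  have hBAc : B = Aᶜ := by
    ext ω; simp [hA_def, hB_def, not_lt]
  have hB : MeasurableSet[m0] B := by rw [hBAc]; exact hA.compl
  have h𝓙τ : 𝓙 ≤ MeasurableSpace.comap τ inferInstance := by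
    rw [h𝓙]
    refine MeasurableSpace.generateFrom_le ?_
    rintro s ⟨u, hu0, hut, rfl⟩
    exact ⟨Set.Ioi u, measurableSet_Ioi, rfl⟩
  have hKle : MeasurableSpace.comap τ inferInstance ⊔ 𝓗 ≤ m0 :=
    sup_le hτ_meas.comap_le h𝓗
  have hGle : 𝓙 ⊔ 𝓗 ≤ m0 := sup_le (h𝓙τ.trans hτ_meas.comap_le) h𝓗
  have h𝓙G : 𝓙 ≤ 𝓙 ⊔ 𝓗 := le_sup_left
  have h𝓗G : 𝓗 ≤ 𝓙 ⊔ 𝓗 := le_sup_right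
  have hτK : MeasurableSpace.comap τ inferInstance
      ≤ MeasurableSpace.comap τ inferInstance ⊔ 𝓗 := le_sup_left
  have h𝓗K : 𝓗 ≤ MeasurableSpace.comap τ inferInstance ⊔ 𝓗 := le_sup_right
  have hA𝓙 : MeasurableSet[𝓙] A := by
    rw [h𝓙]
    exact MeasurableSpace.measurableSet_generateFrom ⟨t, ht, le_rfl, rfl⟩
  have hB𝓙 : MeasurableSet[𝓙] B := by rw [hBAc]; exact hA𝓙.compl
  have hAG : MeasurableSet[𝓙 ⊔ 𝓗] A := h𝓙G _ hA𝓙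
  have hBG : MeasurableSet[𝓙 ⊔ 𝓗] B := h𝓙G _ hB𝓙
  have hAK : MeasurableSet[MeasurableSpace.comap τ inferInstance ⊔ 𝓗] A :=
    hτK _ ⟨Set.Ioi t, measurableSet_Ioi, rfl⟩
  have hBK : MeasurableSet[MeasurableSpace.comap τ inferInstance ⊔ 𝓗] B := by
    rw [hBAc]; exact hAK.compl
  -- ## Trace property: the part of `comap τ ⊔ 𝓗` inside `B` is contained in `𝓙 ⊔ 𝓗`.
  have hreal : (inferInstance : MeasurableSpace ℝ)
      = MeasurableSpace.generateFrom (Set.range Set.Ioi) := by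
    rw [show (inferInstance : MeasurableSpace ℝ) = borel ℝ from rfl]
    exact borel_eq_generateFrom_Ioi ℝ
  have hJB' : MeasurableSpace.comap τ inferInstance ≤ traceSpace 𝓙 B hB𝓙 := by
    rw [hreal, MeasurableSpace.comap_generateFrom]
    refine MeasurableSpace.generateFrom_le ?_
    rintro _ ⟨_, ⟨u, rfl⟩, rfl⟩
    show MeasurableSet[𝓙] (τ ⁻¹' Set.Ioi u ∩ B)
    rcases lt_or_ge u 0 with hu | hu
    · have hset : τ ⁻¹' Set.Ioi u = Set.univ := by
        ext ω; simpa using lt_of_lt_of_le hu (hτ_nonneg ω)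
      rw [hset, Set.univ_inter]; exact hB𝓙
    · rcases le_or_gt u t with hut | hut
      · have hgen : MeasurableSet[𝓙] (τ ⁻¹' Set.Ioi u) := by
          rw [h𝓙]
          exact MeasurableSpace.measurableSet_generateFrom ⟨u, hu, hut, rfl⟩
        exact hgen.inter hB𝓙
      · have hset : τ ⁻¹' Set.Ioi u ∩ B = ∅ := by
          ext ω
          simp only [Set.mem_inter_iff, Set.mem_preimage, Set.mem_Ioi,
            Set.mem_empty_iff_false, iff_false, not_and, hB_def, Set.mem_setOf_eq]
          intro h1 h2
          exact absurd ((hut.trans h1).trans_le h2) (lt_irrefl t)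
        rw [hset]; exact MeasurableSet.empty
  have htrace : ∀ S : Set Ω, MeasurableSet[MeasurableSpace.comap τ inferInstance ⊔ 𝓗] S →
      MeasurableSet[𝓙 ⊔ 𝓗] (S ∩ B) := by
    intro S hS
    have hle : MeasurableSpace.comap τ inferInstance ⊔ 𝓗
        ≤ traceSpace (𝓙 ⊔ 𝓗) B hBG := by
      refine sup_le (hJB'.trans ?_) ?_
      · exact fun s hs => h𝓙G _ hs
      · exact fun s hs => (h𝓗G _ hs).inter hBG
    exact hle S hS
  have hind_meas : ∀ g : Ω → ℝ,
      Measurable[MeasurableSpace.comap τ inferInstance ⊔ 𝓗] g →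
      Measurable[𝓙 ⊔ 𝓗] (B.indicator g) := by
    intro g hg C hC
    have hset : B.indicator g ⁻¹' C = (g ⁻¹' C ∩ B) ∪ ((fun _ : Ω => (0:ℝ)) ⁻¹' C \ B) := by
      ext ω
      by_cases hω : ω ∈ B <;>
        simp [Set.indicator_of_mem, Set.indicator_of_notMem, hω]
    rw [hset]
    exact (htrace _ (hg hC)).union
      (((@measurable_const ℝ Ω _ (𝓙 ⊔ 𝓗) 0) hC).diff hBG)
  -- ## Conditional expectations
  set oneA : Ω → ℝ := A.indicator (fun _ => (1:ℝ)) with h1A_def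
  set oneB : Ω → ℝ := B.indicator (fun _ => (1:ℝ)) with h1B_def
  set p : Ω → ℝ := condExp 𝓗 P oneA with hp_def
  set h : Ω → ℝ := condExp 𝓗 P (fun ω' => oneA ω' * Y ω') with hh_def
  set g : Ω → ℝ := condExp (MeasurableSpace.comap τ inferInstance ⊔ 𝓗) P Y with hg_def
  have h1A_nonneg : ∀ ω, 0 ≤ oneA ω := fun ω =>
    Set.indicator_nonneg (fun _ _ => zero_le_one) ω
  have hp_meas : StronglyMeasurable[𝓗] p := stronglyMeasurable_condExp
  have hh_meas : StronglyMeasurable[𝓗] h := stronglyMeasurable_condExp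
  have hg_meas : StronglyMeasurable[MeasurableSpace.comap τ inferInstance ⊔ 𝓗] g :=
    stronglyMeasurable_condExp
  have hp_int : Integrable p P := integrable_condExp
  have hh_int : Integrable h P := integrable_condExp
  have hg_int : Integrable g P := integrable_condExp
  have h1A_int : Integrable oneA P := helper_int_indicator (integrable_const (1:ℝ)) hA
  have h1A_meas : Measurable[m0] oneA := hm_indicator hA hm_const
  have h1AY_eq : (fun ω => oneA ω * Y ω) = A.indicator Y := by
    funext ω; rw [h1A_def]; by_cases hω : ω ∈ A <;> simp [hω]
  have h1AY_int : Integrable (fun ω => oneA ω * Y ω) P := by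
    rw [h1AY_eq]; exact helper_int_indicator hY_int hA
  have hp_nonneg : 0 ≤ᵐ[P] p :=
    condExp_nonneg (Filter.Eventually.of_forall h1A_nonneg)
  have hp_meas0 : Measurable[m0] p := (helper_sm_meas hp_meas).mono h𝓗 le_rfl
  have hh_meas0 : Measurable[m0] h := (helper_sm_meas hh_meas).mono h𝓗 le_rfl
  -- ## Lemma L1 : pulling a bounded 𝓗-measurable factor out
  have L1 : ∀ q : Ω → ℝ, StronglyMeasurable[𝓗] q → (∃ c : ℝ, ∀ ω, ‖q ω‖ ≤ c) →
      ∫ ω, q ω * oneA ω ∂P = ∫ ω, q ω * p ω ∂P := by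
    intro q hq hqb
    have hq_int : Integrable (fun ω => q ω * oneA ω) P :=
      helper_bdd_mul h1A_int (helper_sm_aesm (hq.mono h𝓗)) hqb
    have hq_int' : Integrable (q * oneA) P := hq_int
    have hmul := condExp_mul_of_stronglyMeasurable_left hq hq_int' h1A_int
    calc ∫ ω, q ω * oneA ω ∂P = ∫ ω, (q * oneA) ω ∂P := rfl
      _ = ∫ ω, (condExp 𝓗 P (q * oneA)) ω ∂P := (integral_condExp h𝓗).symm
      _ = ∫ ω, (q * p) ω ∂P := integral_congr_ae hmul
      _ = ∫ ω, q ω * p ω ∂P := rfl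
  -- ## Lemma L2 : lintegral version for nonnegative 𝓗-measurable factors
  have L2 : ∀ q : Ω → ℝ, Measurable[𝓗] q → (∀ ω, 0 ≤ q ω) →
      ∫⁻ ω, ENNReal.ofReal (q ω * oneA ω) ∂P = ∫⁻ ω, ENNReal.ofReal (q ω * p ω) ∂P := by
    intro q hq hq0
    have hqn_meas : ∀ n : ℕ, Measurable[𝓗] fun ω => min (q ω) (n:ℝ) :=
      fun n => hm_min hq hm_const
    have hqn0 : ∀ (n : ℕ) ω, 0 ≤ min (q ω) (n:ℝ) :=
      fun n ω => le_min (hq0 ω) (Nat.cast_nonneg n)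
    have hqnb : ∀ n : ℕ, ∀ ω, ‖min (q ω) (n:ℝ)‖ ≤ (n:ℝ) := by
      intro n ω
      rw [Real.norm_eq_abs, abs_of_nonneg (hqn0 n ω)]
      exact min_le_right _ _
    have hstep : ∀ n : ℕ,
        ∫⁻ ω, ENNReal.ofReal (min (q ω) (n:ℝ) * oneA ω) ∂P
          = ∫⁻ ω, ENNReal.ofReal (min (q ω) (n:ℝ) * p ω) ∂P := by
      intro n
      have hmeas0 : AEStronglyMeasurable[m0] (fun ω => min (q ω) (n:ℝ)) P :=
        helper_meas_aesm ((hqn_meas n).mono h𝓗 le_rfl)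
      have hint1 : Integrable (fun ω => min (q ω) (n:ℝ) * oneA ω) P :=
        helper_bdd_mul h1A_int hmeas0 ⟨(n:ℝ), hqnb n⟩
      have hint2 : Integrable (fun ω => min (q ω) (n:ℝ) * p ω) P :=
        helper_bdd_mul hp_int hmeas0 ⟨(n:ℝ), hqnb n⟩
      have hnn1 : 0 ≤ᵐ[P] fun ω => min (q ω) (n:ℝ) * oneA ω :=
        Filter.Eventually.of_forall fun ω => mul_nonneg (hqn0 n ω) (h1A_nonneg ω)
      have hnn2 : 0 ≤ᵐ[P] fun ω => min (q ω) (n:ℝ) * p ω :=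
        hp_nonneg.mono fun ω hω => mul_nonneg (hqn0 n ω) hω
      have e1 := ofReal_integral_eq_lintegral_ofReal hint1 hnn1
      have e2 := ofReal_integral_eq_lintegral_ofReal hint2 hnn2
      have e3 := L1 (fun ω => min (q ω) (n:ℝ))
        (helper_meas_sm (hqn_meas n)) ⟨(n:ℝ), hqnb n⟩
      rw [← e1, ← e2, e3]
    have hmeas1 : ∀ n : ℕ,
        Measurable[m0] fun ω => ENNReal.ofReal (min (q ω) (n:ℝ) * oneA ω) :=
      fun n => hm_ofReal (hm_mul ((hqn_meas n).mono h𝓗 le_rfl) h1A_meas)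
    have hmeas2 : ∀ n : ℕ,
        Measurable[m0] fun ω => ENNReal.ofReal (min (q ω) (n:ℝ) * p ω) :=
      fun n => hm_ofReal (hm_mul ((hqn_meas n).mono h𝓗 le_rfl) hp_meas0)
    have hmono1 : Monotone fun (n : ℕ) (ω : Ω) =>
        ENNReal.ofReal (min (q ω) (n:ℝ) * oneA ω) := by
      intro n m hnm ω
      exact ENNReal.ofReal_le_ofReal (mul_le_mul_of_nonneg_right
        (min_le_min le_rfl (Nat.cast_le.2 hnm)) (h1A_nonneg ω))
    have hmono2 : Monotone fun (n : ℕ) (ω : Ω) =>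
        ENNReal.ofReal (min (q ω) (n:ℝ) * p ω) := by
      intro n m hnm ω
      rcases le_or_gt 0 (p ω) with hpω | hpω
      · exact ENNReal.ofReal_le_ofReal (mul_le_mul_of_nonneg_right
          (min_le_min le_rfl (Nat.cast_le.2 hnm)) hpω)
      · have h1n : min (q ω) (n:ℝ) * p ω ≤ 0 :=
          mul_nonpos_iff.2 (Or.inl ⟨hqn0 n ω, hpω.le⟩)
        have h1m : min (q ω) (m:ℝ) * p ω ≤ 0 :=
          mul_nonpos_iff.2 (Or.inl ⟨hqn0 m ω, hpω.le⟩)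
        simp only [ENNReal.ofReal_eq_zero.2 h1n, ENNReal.ofReal_eq_zero.2 h1m, le_refl]
    have hsup1 : ∀ ω, (⨆ n : ℕ, ENNReal.ofReal (min (q ω) (n:ℝ) * oneA ω))
        = ENNReal.ofReal (q ω * oneA ω) := by
      intro ω
      refine le_antisymm (iSup_le fun n => ENNReal.ofReal_le_ofReal
        (mul_le_mul_of_nonneg_right (min_le_left _ _) (h1A_nonneg ω))) ?_
      refine le_iSup_of_le ⌈q ω⌉₊ ?_
      rw [min_eq_left (Nat.le_ceil _)]
    have hsup2 : ∀ ω, (⨆ n : ℕ, ENNReal.ofReal (min (q ω) (n:ℝ) * p ω))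
        = ENNReal.ofReal (q ω * p ω) := by
      intro ω
      rcases le_or_gt 0 (p ω) with hpω | hpω
      · refine le_antisymm (iSup_le fun n => ENNReal.ofReal_le_ofReal
          (mul_le_mul_of_nonneg_right (min_le_left _ _) hpω)) ?_
        refine le_iSup_of_le ⌈q ω⌉₊ ?_
        rw [min_eq_left (Nat.le_ceil _)]
      · have h1 : ∀ n : ℕ, ENNReal.ofReal (min (q ω) (n:ℝ) * p ω) = 0 :=
          fun n => ENNReal.ofReal_eq_zero.2 (mul_nonpos_iff.2 (Or.inl ⟨hqn0 n ω, hpω.le⟩))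
        have h2 : ENNReal.ofReal (q ω * p ω) = 0 :=
          ENNReal.ofReal_eq_zero.2 (mul_nonpos_iff.2 (Or.inl ⟨hq0 ω, hpω.le⟩))
        simp [h1, h2]
    calc ∫⁻ ω, ENNReal.ofReal (q ω * oneA ω) ∂P
        = ∫⁻ ω, ⨆ n : ℕ, ENNReal.ofReal (min (q ω) (n:ℝ) * oneA ω) ∂P :=
          lintegral_congr fun ω => (hsup1 ω).symm
      _ = ⨆ n : ℕ, ∫⁻ ω, ENNReal.ofReal (min (q ω) (n:ℝ) * oneA ω) ∂P :=
          lintegral_iSup hmeas1 hmono1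
      _ = ⨆ n : ℕ, ∫⁻ ω, ENNReal.ofReal (min (q ω) (n:ℝ) * p ω) ∂P :=
          iSup_congr hstep
      _ = ∫⁻ ω, ⨆ n : ℕ, ENNReal.ofReal (min (q ω) (n:ℝ) * p ω) ∂P :=
          (lintegral_iSup hmeas2 hmono2).symm
      _ = ∫⁻ ω, ENNReal.ofReal (q ω * p ω) ∂P := lintegral_congr hsup2
  -- ## Lemma L3 : signed version with integrability transfer
  have L3 : ∀ q : Ω → ℝ, Measurable[𝓗] q →
      Integrable (fun ω => q ω * oneA ω) P →
      Integrable (fun ω => q ω * p ω) P ∧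
        ∫ ω, q ω * oneA ω ∂P = ∫ ω, q ω * p ω ∂P := by
    intro q hq hint
    have key : ∀ r : Ω → ℝ, Measurable[𝓗] r → (∀ ω, 0 ≤ r ω) → (∀ ω, r ω ≤ |q ω|) →
        Integrable (fun ω => r ω * oneA ω) P ∧ Integrable (fun ω => r ω * p ω) P ∧
          ∫ ω, r ω * oneA ω ∂P = ∫ ω, r ω * p ω ∂P := by
      intro r hr hr0 hrq
      have hr_meas0 : Measurable[m0] fun ω => r ω * oneA ω :=
        hm_mul (hr.mono h𝓗 le_rfl) h1A_meas
      have hint1 : Integrable (fun ω => r ω * oneA ω) P := by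
        refine helper_int_mono hint (helper_meas_aesm hr_meas0)
          (Filter.Eventually.of_forall fun ω => ?_)
        rw [Real.norm_eq_abs, Real.norm_eq_abs, abs_mul, abs_mul,
          abs_of_nonneg (hr0 ω)]
        exact mul_le_mul_of_nonneg_right (hrq ω) (abs_nonneg _)
      have hnn1 : ∀ ω, 0 ≤ r ω * oneA ω := fun ω => mul_nonneg (hr0 ω) (h1A_nonneg ω)
      have hnn2 : ∀ᵐ ω ∂P, 0 ≤ r ω * p ω :=
        hp_nonneg.mono fun ω hω => mul_nonneg (hr0 ω) hω
      have hlfin : ∫⁻ ω, ENNReal.ofReal (r ω * oneA ω) ∂P < ⊤ := by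
        have hfin := hint1.hasFiniteIntegral
        rwa [hasFiniteIntegral_iff_ofReal (Filter.Eventually.of_forall hnn1)] at hfin
      have hleq := L2 r hr hr0
      have hint2 : Integrable (fun ω => r ω * p ω) P := by
        refine ⟨helper_meas_aesm (hm_mul (hr.mono h𝓗 le_rfl) hp_meas0), ?_⟩
        rw [hasFiniteIntegral_iff_ofReal hnn2, ← hleq]
        exact hlfin
      have heq : ∫ ω, r ω * oneA ω ∂P = ∫ ω, r ω * p ω ∂P := by
        have e1 := ofReal_integral_eq_lintegral_ofReal hint1
          (Filter.Eventually.of_forall hnn1)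
        have e2 := ofReal_integral_eq_lintegral_ofReal hint2 hnn2
        have e3 : ENNReal.ofReal (∫ ω, r ω * oneA ω ∂P)
            = ENNReal.ofReal (∫ ω, r ω * p ω ∂P) := by
          rw [e1, e2, hleq]
        exact (ENNReal.ofReal_eq_ofReal_iff
          (integral_nonneg hnn1) (integral_nonneg_of_ae hnn2)).1 e3
      exact ⟨hint1, hint2, heq⟩
    obtain ⟨ip1, ip2, ep⟩ := key (fun ω => max (q ω) 0) (hm_max hq hm_const)
      (fun ω => le_max_right _ _) (fun ω => max_le (le_abs_self _) (abs_nonneg _))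
    obtain ⟨im1, im2, em⟩ := key (fun ω => max (-q ω) 0) (hm_max (hm_neg hq) hm_const)
      (fun ω => le_max_right _ _) (fun ω => max_le (neg_le_abs _) (abs_nonneg _))
    have hqsplit : ∀ ω, q ω = max (q ω) 0 - max (-q ω) 0 := fun ω =>
      (max_zero_sub_max_neg_zero_eq_self (q ω)).symm
    have hfunA : (fun ω => q ω * oneA ω)
        = fun ω => max (q ω) 0 * oneA ω - max (-q ω) 0 * oneA ω := by
      funext ω; rw [← sub_mul, ← hqsplit]
    have hfunP : (fun ω => q ω * p ω)
        = fun ω => max (q ω) 0 * p ω - max (-q ω) 0 * p ω := by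
      funext ω; rw [← sub_mul, ← hqsplit]
    constructor
    · rw [hfunP]; exact helper_int_sub ip2 im2
    · rw [hfunA, hfunP, integral_sub ip1 im1, integral_sub ip2 im2, ep, em]
  -- ## Integrability of the first term of the target
  have hq1'_meas : Measurable[𝓗] fun ω => |h ω / p ω| :=
    hm_abs (hm_div (helper_sm_meas hh_meas) (helper_sm_meas hp_meas))
  have hlfin1 : ∫⁻ ω, ENNReal.ofReal (|h ω / p ω| * oneA ω) ∂P < ⊤ := by
    rw [L2 _ hq1'_meas fun ω => abs_nonneg _]
    have hcong : (fun ω => ENNReal.ofReal (|h ω / p ω| * p ω))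
        =ᵐ[P] fun ω => ENNReal.ofReal |h ω| := by
      filter_upwards [hpos] with ω hω
      rw [abs_div, abs_of_pos hω, div_mul_cancel₀ _ (ne_of_gt hω)]
    rw [lintegral_congr_ae hcong]
    have hfin := hh_int.hasFiniteIntegral
    rw [hasFiniteIntegral_iff_norm] at hfin
    simpa [Real.norm_eq_abs] using hfin
  have hf1_eq : ∀ ω, oneA ω / p ω * h ω = (h ω / p ω) * oneA ω := by
    intro ω; ring
  have hf1_int : Integrable (fun ω => oneA ω / p ω * h ω) P := by
    refine ⟨helper_meas_aesm (hm_mul (hm_div h1A_meas hp_meas0) hh_meas0), ?_⟩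
    rw [hasFiniteIntegral_iff_norm]
    have hnorm : ∀ ω, ‖oneA ω / p ω * h ω‖ = |h ω / p ω| * oneA ω := by
      intro ω
      rw [Real.norm_eq_abs, hf1_eq ω, abs_mul, abs_of_nonneg (h1A_nonneg ω)]
    simp only [hnorm]
    exact hlfin1
  -- ## The target function and its measurability / integrability
  have h1Bg_eq : (fun ω => oneB ω * g ω) = B.indicator g := by
    funext ω; rw [h1B_def]; by_cases hω : ω ∈ B <;> simp [hω]
  have h1Bg_int : Integrable (fun ω => oneB ω * g ω) P := by
    rw [h1Bg_eq]; exact helper_int_indicator hg_int hB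
  set Z : Ω → ℝ := fun ω => oneA ω / p ω * h ω + oneB ω * g ω with hZ_def
  have hZ_int : Integrable Z P := helper_int_add hf1_int h1Bg_int
  have hZ_meas : StronglyMeasurable[𝓙 ⊔ 𝓗] Z := by
    refine helper_meas_sm ?_
    have h1 : Measurable[𝓙 ⊔ 𝓗] fun ω => oneA ω / p ω * h ω := by
      refine hm_mul (hm_div ?_ ?_) ?_
      · exact hm_indicator hAG hm_const
      · exact (helper_sm_meas hp_meas).mono h𝓗G le_rfl
      · exact (helper_sm_meas hh_meas).mono h𝓗G le_rfl
    have h2 : Measurable[𝓙 ⊔ 𝓗] fun ω => oneB ω * g ω := by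
      rw [h1Bg_eq]
      exact hind_meas g (helper_sm_meas hg_meas)
    exact hm_add h1 h2
  -- ## The generating π-system of `𝓙 ⊔ 𝓗`
  set 𝒮 : Set (Set Ω) := {s | ∃ J H' : Set Ω,
    (J = Set.univ ∨ ∃ u : ℝ, 0 ≤ u ∧ u ≤ t ∧ J = {ω | u < τ ω}) ∧
    MeasurableSet[𝓗] H' ∧ s = J ∩ H'} with h𝒮_def
  have hGgen : 𝓙 ⊔ 𝓗 = MeasurableSpace.generateFrom 𝒮 := by
    apply le_antisymm
    · refine sup_le ?_ ?_
      · rw [h𝓙]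
        refine MeasurableSpace.generateFrom_le ?_
        rintro s ⟨u, hu0, hut, rfl⟩
        exact MeasurableSpace.measurableSet_generateFrom
          ⟨{ω | u < τ ω}, Set.univ, Or.inr ⟨u, hu0, hut, rfl⟩, MeasurableSet.univ,
            (Set.inter_univ _).symm⟩
      · intro s hs
        exact MeasurableSpace.measurableSet_generateFrom
          ⟨Set.univ, s, Or.inl rfl, hs, (Set.univ_inter _).symm⟩
    · refine MeasurableSpace.generateFrom_le ?_
      rintro s ⟨J, H', hJ, hH', rfl⟩
      have hJG : MeasurableSet[𝓙 ⊔ 𝓗] J := by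
        rcases hJ with rfl | ⟨u, hu0, hut, rfl⟩
        · exact MeasurableSet.univ
        · refine h𝓙G _ ?_
          rw [h𝓙]
          exact MeasurableSpace.measurableSet_generateFrom ⟨u, hu0, hut, rfl⟩
      exact hJG.inter (h𝓗G _ hH')
  have hPi : IsPiSystem 𝒮 := by
    rintro s1 ⟨J1, H1, hJ1, hH1, rfl⟩ s2 ⟨J2, H2, hJ2, hH2, rfl⟩ _
    refine ⟨J1 ∩ J2, H1 ∩ H2, ?_, hH1.inter hH2, ?_⟩
    · rcases hJ1 with rfl | ⟨u1, hu10, hu1t, rfl⟩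
      · rcases hJ2 with rfl | ⟨u2, hu20, hu2t, rfl⟩
        · exact Or.inl (Set.univ_inter _)
        · exact Or.inr ⟨u2, hu20, hu2t, Set.univ_inter _⟩
      · rcases hJ2 with rfl | ⟨u2, hu20, hu2t, rfl⟩
        · exact Or.inr ⟨u1, hu10, hu1t, Set.inter_univ _⟩
        · refine Or.inr ⟨max u1 u2, le_max_of_le_left hu10, max_le hu1t hu2t, ?_⟩
          ext ω
          simp [max_lt_iff, Set.mem_inter_iff]
    · ext ω
      simp only [Set.mem_inter_iff]
      tauto
  -- ## The basic integral identity on the π-system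
  have hbasic : ∀ s ∈ 𝒮, ∫ x in s, Z x ∂P = ∫ x in s, Y x ∂P := by
    rintro s ⟨J, H', hJ, hH', rfl⟩
    have hH'm0 : MeasurableSet[m0] H' := h𝓗 _ hH'
    have hJm0 : MeasurableSet[m0] J := by
      rcases hJ with rfl | ⟨u, hu0, hut, rfl⟩
      · exact MeasurableSet.univ
      · exact measurableSet_lt measurable_const hτ_meas
    have hs_m0 : MeasurableSet[m0] (J ∩ H') := hJm0.inter hH'm0
    have hAJ : A ⊆ J := by
      rcases hJ with rfl | ⟨u, hu0, hut, rfl⟩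
      · exact Set.subset_univ _
      · intro ω hω; exact hut.trans_lt hω
    have hJK : MeasurableSet[MeasurableSpace.comap τ inferInstance ⊔ 𝓗] J := by
      rcases hJ with rfl | ⟨u, hu0, hut, rfl⟩
      · exact MeasurableSet.univ
      · exact hτK _ ⟨Set.Ioi u, measurableSet_Ioi, rfl⟩
    -- term 1
    have e1 : ∫ x in J ∩ H', oneA x / p x * h x ∂P = ∫ x in H' ∩ A, Y x ∂P := by
      have hrw : ∀ ω, (J ∩ H').indicator (fun ω' => oneA ω' / p ω' * h ω') ω
          = (H'.indicator (fun _ => (1:ℝ)) ω * (h ω / p ω)) * oneA ω := by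
        intro ω
        simp only [h1A_def, Set.indicator_apply, Set.mem_inter_iff]
        have hJA' : ω ∈ A → ω ∈ J := fun hx => hAJ hx
        split_ifs <;>
          first
            | ring1
            | exact absurd ‹ω ∈ J ∧ ω ∈ H'›.2 ‹ω ∉ H'›
            | exact absurd ⟨hJA' ‹ω ∈ A›, ‹ω ∈ H'›⟩ ‹¬(ω ∈ J ∧ ω ∈ H')›
      set qS : Ω → ℝ := fun ω => H'.indicator (fun _ => (1:ℝ)) ω * (h ω / p ω) with hqS_def
      have hqS_meas : Measurable[𝓗] qS :=
        hm_mul (hm_indicator hH' hm_const)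
          (hm_div (helper_sm_meas hh_meas) (helper_sm_meas hp_meas))
      have hqS_int : Integrable (fun ω => qS ω * oneA ω) P := by
        have hii := helper_int_indicator hf1_int hs_m0
        have hfe : (J ∩ H').indicator (fun ω' => oneA ω' / p ω' * h ω')
            = fun ω => qS ω * oneA ω := funext hrw
        rwa [hfe] at hii
      obtain ⟨-, heq3⟩ := L3 qS hqS_meas hqS_int
      calc ∫ x in J ∩ H', oneA x / p x * h x ∂P
          = ∫ x, (J ∩ H').indicator (fun ω' => oneA ω' / p ω' * h ω') x ∂P :=
            (helper_integral_indicator hs_m0).symm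
        _ = ∫ x, qS x * oneA x ∂P := integral_congr_ae (Filter.Eventually.of_forall hrw)
        _ = ∫ x, qS x * p x ∂P := heq3
        _ = ∫ x, H'.indicator h x ∂P := by
            refine integral_congr_ae ?_
            filter_upwards [hpos] with ω hω
            show H'.indicator (fun _ => (1:ℝ)) ω * (h ω / p ω) * p ω = H'.indicator h ω
            by_cases hωH : ω ∈ H'
            · rw [Set.indicator_of_mem hωH, Set.indicator_of_mem hωH, one_mul,
                div_mul_cancel₀ _ (ne_of_gt hω)]
            · rw [Set.indicator_of_notMem hωH, Set.indicator_of_notMem hωH, zero_mul, zero_mul]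
        _ = ∫ x in H', h x ∂P := helper_integral_indicator hH'm0
        _ = ∫ x in H', oneA x * Y x ∂P := setIntegral_condExp h𝓗 h1AY_int hH'
        _ = ∫ x in H', A.indicator Y x ∂P := by rw [h1AY_eq]
        _ = ∫ x in H' ∩ A, Y x ∂P := helper_setIntegral_indicator hA
    -- term 2
    have hsBK : MeasurableSet[MeasurableSpace.comap τ inferInstance ⊔ 𝓗] ((J ∩ H') ∩ B) :=
      (hJK.inter (h𝓗K _ hH')).inter hBK
    have e2 : ∫ x in J ∩ H', oneB x * g x ∂P = ∫ x in (J ∩ H') ∩ B, Y x ∂P := by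
      calc ∫ x in J ∩ H', oneB x * g x ∂P
          = ∫ x in J ∩ H', B.indicator g x ∂P := by rw [← h1Bg_eq]
        _ = ∫ x in (J ∩ H') ∩ B, g x ∂P := helper_setIntegral_indicator hB
        _ = ∫ x in (J ∩ H') ∩ B, Y x ∂P := setIntegral_condExp hKle hY_int hsBK
    -- combine
    have hsplitY : ∫ x in J ∩ H', Y x ∂P
        = ∫ x in (J ∩ H') ∩ A, Y x ∂P + ∫ x in (J ∩ H') \ A, Y x ∂P :=
      (helper_integral_inter_add_diff hA (helper_int_on hY_int)).symm
    have hseteq : (J ∩ H') ∩ A = H' ∩ A := by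
      ext ω
      simp only [Set.mem_inter_iff]
      exact ⟨fun ⟨⟨_, h2⟩, h3⟩ => ⟨h2, h3⟩, fun ⟨h2, h3⟩ => ⟨⟨hAJ h3, h2⟩, h3⟩⟩
    have hsetdiff : (J ∩ H') \ A = (J ∩ H') ∩ B := by
      rw [hBAc, Set.diff_eq]
    have hsplitZ : ∫ x in J ∩ H', Z x ∂P
        = ∫ x in J ∩ H', oneA x / p x * h x ∂P + ∫ x in J ∩ H', oneB x * g x ∂P := by
      simp only [hZ_def]
      exact integral_add (helper_int_on hf1_int) (helper_int_on h1Bg_int)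
    rw [hsplitZ, e1, e2, hsplitY, hseteq, hsetdiff]
  -- ## Extension to all of `𝓙 ⊔ 𝓗` by the π–λ theorem
  have htotal : ∫ x, Z x ∂P = ∫ x, Y x ∂P := by
    have hu := hbasic Set.univ
      ⟨Set.univ, Set.univ, Or.inl rfl, MeasurableSet.univ, (Set.univ_inter _).symm⟩
    simpa [Measure.restrict_univ] using hu
  have hC : ∀ s : Set Ω, MeasurableSet[𝓙 ⊔ 𝓗] s →
      ∫ x in s, Z x ∂P = ∫ x in s, Y x ∂P := by
    intro s hs
    refine MeasurableSpace.induction_on_inter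
      (C := fun s _ => ∫ x in s, Z x ∂P = ∫ x in s, Y x ∂P) hGgen hPi ?_ (fun t ht => hbasic t ht) ?_ ?_ s hs
    · simp
    · intro u hu hCu
      have hu0 : MeasurableSet[m0] u := hGle _ hu
      have h1 := helper_integral_add_compl hu0 hZ_int
      have h2 := helper_integral_add_compl hu0 hY_int
      rw [htotal] at h1
      rw [← h2] at h1
      linarith
    · intro f hdisj hfm hCf
      have hfm0 : ∀ i, MeasurableSet[m0] (f i) := fun i => hGle _ (hfm i)
      rw [helper_integral_iUnion hfm0 hdisj (helper_int_on hZ_int),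
        helper_integral_iUnion hfm0 hdisj (helper_int_on hY_int)]
      exact tsum_congr hCf
  -- ## Conclusion
  have hfinal : Z =ᵐ[P] condExp (𝓙 ⊔ 𝓗) P Y :=
    ae_eq_condExp_of_forall_setIntegral_eq hGle hY_int
      (fun s _ _ => helper_int_on hZ_int) (fun s hs _ => hC s hs)
      hZ_meas.aestronglyMeasurable
  exact hfinal.symm
end
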